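/- arXiv:1401.1474 — 9 statements merged into one kernel-verified Lean document; each statement's English description precedes it below -/
import Mathlib

section
/- A cubic polynomial x^3 + px^2 + qx + r with real coefficients and r ≠ 0 satisfies p·r^(1/3) + 3·r^(2/3) + q = 0 if and only if there exist real numbers h, s with s ≠ 0 such that r = s^3, q = -(h+3)s^2, and p = hs. -/
noncomputable def cbrt (x : ℝ) : ℝ := if x < 0 then -((-x) ^ ((1:ℝ)/3)) else x ^ ((1:ℝ)/3)

lemma cbrt_cube (x : ℝ) : (cbrt x) ^ 3 = x := by
  unfold cbrt
  split_ifs with h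
  · have hx : (0:ℝ) ≤ -x := by linarith
    rw [Odd.neg_pow (⟨1, by norm_num⟩), ← Real.rpow_natCast ((-x) ^ ((1:ℝ)/3)) 3,
      ← Real.rpow_mul hx]
    norm_num
  · push_neg at h
    rw [← Real.rpow_natCast (x ^ ((1:ℝ)/3)) 3, ← Real.rpow_mul h]
    norm_num

lemma cbrt_of_cube (s : ℝ) : cbrt (s ^ 3) = s := by
  have := cbrt_cube (s ^ 3)
  exact (Odd.strictMono_pow (R := ℝ) (⟨1, by norm_num⟩ : Odd 3)).injective this

theorem rcp_characterization (p q r : ℝ) (hr : r ≠ 0) :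
    p * cbrt r + 3 * (cbrt r) ^ 2 + q = 0 ↔
      ∃ h s : ℝ, s ≠ 0 ∧ r = s ^ 3 ∧ q = -(h + 3) * s ^ 2 ∧ p = h * s := by
  have hc := cbrt_cube r
  have hs0 : cbrt r ≠ 0 := by
    intro h; apply hr; rw [← hc, h]; ring
  constructor
  · intro heq
    refine ⟨p / cbrt r, cbrt r, hs0, hc.symm, ?_, by field_simp⟩
    field_simp
    linear_combination heq
  · rintro ⟨h, s, hs, rfl, rfl, rfl⟩
    rw [cbrt_of_cube]
    ring
end

section
/- For real h, s with s ≠ 0 and any z ≠ s, the identity ρ(h,s,η_s(z)) = -s^3·ρ(h,s,z)/(s-z)^3 holds, where ρ(h,s,x) = x^3 + hsx^2 - (h+3)s^2x + s^3 and η_s(z) = s^2/(s-z). -/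
theorem rho_eta_identity (h s z : ℝ) (hs : s ≠ 0) (hz : z ≠ s) :
    (s ^ 2 / (s - z)) ^ 3 + h * s * (s ^ 2 / (s - z)) ^ 2
      - (h + 3) * s ^ 2 * (s ^ 2 / (s - z)) + s ^ 3 =
    -s ^ 3 * (z ^ 3 + h * s * z ^ 2 - (h + 3) * s ^ 2 * z + s ^ 3) / (s - z) ^ 3 := by
  have h1 : s - z ≠ 0 := sub_ne_zero.mpr (Ne.symm hz)
  field_simp
  ring
end

section
/- If α is a zero of ρ(h,s,x) = x^3 + hsx^2 - (h+3)s^2x + s^3 (with s ≠ 0), then s^2/(s-α) and -s(s-α)/α are also zeros of ρ(h,s,x); i.e., the zero set of ρ(h,s,x) is {α, η_s(α), η_s^2(α)} where η_s(z) = s^2/(s-z). -/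
theorem rcp_zero_set (h s α : ℝ) (hs : s ≠ 0)
    (hα : α ^ 3 + h * s * α ^ 2 - (h + 3) * s ^ 2 * α + s ^ 3 = 0) :
    {x : ℝ | x ^ 3 + h * s * x ^ 2 - (h + 3) * s ^ 2 * x + s ^ 3 = 0} =
      {α, s ^ 2 / (s - α), -(s * (s - α)) / α} := by
  have hα0 : α ≠ 0 := by
    rintro rfl
    simp at hα
    exact hs hα
  have hsα : s - α ≠ 0 := by
    intro h0
    have hαs : α = s := by linarith
    subst hαs
    have h3 : α ^ 3 = 0 := by linear_combination -hα
    exact hα0 (pow_eq_zero_iff (three_ne_zero) |>.mp h3)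
  have key : ∀ y : ℝ, α * (s - α) * (y ^ 3 + h * s * y ^ 2 - (h + 3) * s ^ 2 * y + s ^ 3)
      = (y - α) * ((s - α) * y - s ^ 2) * (α * y + s * (s - α)) := by
    intro y
    linear_combination (y * (s - y)) * hα
  ext x
  simp only [Set.mem_setOf_eq, Set.mem_insert_iff, Set.mem_singleton_iff]
  constructor
  · intro hx
    have h0 : (x - α) * ((s - α) * x - s ^ 2) * (α * x + s * (s - α)) = 0 := by
      rw [← key x, hx]; ring
    rcases mul_eq_zero.mp h0 with h1 | h1
    · rcases mul_eq_zero.mp h1 with h2 | h2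
      · left; linarith
      · right; left
        field_simp
        linarith
    · right; right
      field_simp
      linarith
  · rintro (rfl | h1 | h1)
    · exact hα
    · have h2 : (s - α) * x - s ^ 2 = 0 := by
        rw [h1]; field_simp; ring
      have h0 : α * (s - α) * (x ^ 3 + h * s * x ^ 2 - (h + 3) * s ^ 2 * x + s ^ 3) = 0 := by
        rw [key x, h2]; ring
      exact (mul_eq_zero.mp h0).resolve_left (mul_ne_zero hα0 hsα)
    · have h2 : α * x + s * (s - α) = 0 := by
        rw [h1]; field_simp; ring
      have h0 : α * (s - α) * (x ^ 3 + h * s * x ^ 2 - (h + 3) * s ^ 2 * x + s ^ 3) = 0 := by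
        rw [key x, h2]; ring
      exact (mul_eq_zero.mp h0).resolve_left (mul_ne_zero hα0 hsα)
end

section
/- If α is a zero of the Shanks cubic polynomial x^3 - hx^2 - (h+3)x - 1, then -1/(α+1) and -(α+1)/α are also zeros of it. -/
theorem shanks_zero_orbit (h α : ℝ)
    (hα : α ^ 3 - h * α ^ 2 - (h + 3) * α - 1 = 0) :
    (-(1 / (α + 1))) ^ 3 - h * (-(1 / (α + 1))) ^ 2 - (h + 3) * (-(1 / (α + 1))) - 1 = 0 ∧
    (-((α + 1) / α)) ^ 3 - h * (-((α + 1) / α)) ^ 2 - (h + 3) * (-((α + 1) / α)) - 1 = 0 := by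
  have h0 : α ≠ 0 := by rintro rfl; norm_num at hα
  have h1 : α + 1 ≠ 0 := by
    intro hc
    have : α = -1 := by linarith
    subst this; norm_num at hα; linarith
  constructor
  · field_simp
    linear_combination (-1 : ℝ) * hα
  · field_simp
    linear_combination hα
end

section
/- For every real h > -3/2 and each k ∈ {0, 2, 4}, the real number x_k = (1/3)·(h + 2·√(h²+3h+9)·cos((1/3)·(arctan(3√3/(3+2h)) + kπ))) satisfies x_k^3 - h·x_k^2 - (h+3)·x_k - 1 = 0. -/
theorem shanks_zeros_trig_pos (h : ℝ) (hh : h > -3/2) (k : ℕ) (hk : k ∈ ({0, 2, 4} : Set ℕ)) :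
    let x := (1/3) * (h + 2 * Real.sqrt (h^2 + 3*h + 9) *
      Real.cos ((1/3) * (Real.arctan (3 * Real.sqrt 3 / (3 + 2*h)) + k * Real.pi)))
    x ^ 3 - h * x ^ 2 - (h + 3) * x - 1 = 0 := by
  intro x
  set y : ℝ := 3 * Real.sqrt 3 / (3 + 2*h) with hy
  set t : ℝ := Real.sqrt (h^2 + 3*h + 9) with htdef
  set c : ℝ := Real.cos ((1/3) * (Real.arctan y + k * Real.pi)) with hcdef
  have hτ : (0:ℝ) < h^2 + 3*h + 9 := by nlinarith [sq_nonneg (h + 3/2)]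
  have ht : t^2 = h^2 + 3*h + 9 := Real.sq_sqrt hτ.le
  have htpos : 0 < t := Real.sqrt_pos.mpr hτ
  have h3 : (0:ℝ) < 3 + 2*h := by linarith
  have key : Real.cos (Real.arctan y + k * Real.pi) = Real.cos (Real.arctan y) := by
    rcases hk with rfl | rfl | rfl
    · simp
    · push_cast
      rw [show Real.arctan y + 2 * Real.pi = Real.arctan y + (1:ℤ) * (2 * Real.pi) by push_cast; ring]
      exact Real.cos_add_int_mul_two_pi _ 1
    · push_cast
      rw [show Real.arctan y + 4 * Real.pi = Real.arctan y + (2:ℤ) * (2 * Real.pi) by push_cast; ring]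
      exact Real.cos_add_int_mul_two_pi _ 2
  have hcos3 : 4*c^3 - 3*c = Real.cos (Real.arctan y) := by
    calc 4*c^3 - 3*c = Real.cos (3 * ((1/3) * (Real.arctan y + k * Real.pi))) := by
          rw [Real.cos_three_mul, hcdef]
      _ = Real.cos (Real.arctan y + k * Real.pi) := by congr 1; ring
      _ = Real.cos (Real.arctan y) := key
  have hs3 : Real.sqrt 3 ^ 2 = 3 := Real.sq_sqrt (by norm_num)
  have hy2 : 1 + y^2 = (2*t/(3+2*h))^2 := by
    rw [hy]
    field_simp
    nlinarith [ht, hs3]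
  have cosarctan : Real.cos (Real.arctan y) = (3+2*h)/(2*t) := by
    rw [Real.cos_arctan, hy2, Real.sqrt_sq (by positivity)]
    rw [one_div_div]
  have hc3 : 2*t*(4*c^3 - 3*c) = 3 + 2*h := by
    rw [hcos3, cosarctan]
    field_simp
  have hx : x = (1/3) * (h + 2*t*c) := rfl
  rw [hx]
  linear_combination (t^2/27) * hc3 + ((6*t*c + 3 + 2*h)/27) * ht
end

section
/- For every real h < -3/2 and each k ∈ {0, 2, 4}, the real number x_k = (1/3)·(h - 2·√(h²+3h+9)·cos((1/3)·(arctan(3√3/(3+2h)) + kπ))) satisfies x_k^3 - h·x_k^2 - (h+3)·x_k - 1 = 0. -/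
theorem shanks_zeros_trig_neg (h : ℝ) (hh : h < -3/2) (k : ℕ) (hk : k ∈ ({0, 2, 4} : Set ℕ)) :
    let x := (1/3) * (h - 2 * Real.sqrt (h^2 + 3*h + 9) *
      Real.cos ((1/3) * (Real.arctan (3 * Real.sqrt 3 / (3 + 2*h)) + k * Real.pi)))
    x ^ 3 - h * x ^ 2 - (h + 3) * x - 1 = 0 := by
  intro x
  set t := 3 * Real.sqrt 3 / (3 + 2*h) with ht
  set s := Real.sqrt (h^2 + 3*h + 9) with hsdef
  set θ := (1/3) * (Real.arctan t + k * Real.pi) with hθ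
  have hτ : (0:ℝ) < h^2 + 3*h + 9 := by nlinarith
  have hs2 : s^2 = h^2 + 3*h + 9 := Real.sq_sqrt hτ.le
  have hspos : 0 < s := Real.sqrt_pos.mpr hτ
  have ha : 3 + 2*h < 0 := by linarith
  have ha' : (3 + 2*h) ≠ 0 := ne_of_lt ha
  have h3 : (Real.sqrt 3)^2 = 3 := Real.sq_sqrt (by norm_num)
  have hkey : 1 + t^2 = (2*s/(-(3+2*h)))^2 := by
    rw [ht, div_pow, div_pow, neg_sq]
    field_simp
    nlinarith [hs2, h3]
  have hsqrt : Real.sqrt (1 + t^2) = 2*s/(-(3+2*h)) := by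
    rw [hkey, Real.sqrt_sq (div_nonneg (by positivity) (by linarith))]
  have hcosat : Real.cos (Real.arctan t) = -(3+2*h)/(2*s) := by
    rw [Real.cos_arctan, hsqrt, one_div_div]
  have hcos3 : Real.cos (Real.arctan t + k * Real.pi) = -(3+2*h)/(2*s) := by
    simp only [Set.mem_insert_iff, Set.mem_singleton_iff] at hk
    rcases hk with rfl | rfl | rfl
    · simpa using hcosat
    · push_cast
      rw [Real.cos_add_two_pi, hcosat]
    · push_cast
      have e : Real.arctan t + 4 * Real.pi
          = Real.arctan t + 2 * Real.pi + 2 * Real.pi := by ring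
      rw [e, Real.cos_add_two_pi, Real.cos_add_two_pi, hcosat]
  have h3θ : (3:ℝ) * θ = Real.arctan t + k * Real.pi := by rw [hθ]; ring
  set c := Real.cos θ with hcdef
  have hc3 : 4 * c^3 - 3 * c = -(3+2*h)/(2*s) := by
    rw [hcdef, ← Real.cos_three_mul, h3θ, hcos3]
  have hc : 8*s*c^3 - 6*s*c = -(3+2*h) := by
    field_simp at hc3
    linarith
  show ((1/3) * (h - 2 * s * c)) ^ 3 - h * ((1/3) * (h - 2 * s * c)) ^ 2
      - (h + 3) * ((1/3) * (h - 2 * s * c)) - 1 = 0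
  linear_combination ((-8*c^3)/27 * s) * hs2 + (-(h^2+3*h+9)/27) * hc
end

section
/- 2cos(2π/7) = (1/3)·(-1 + 2√7·cos((1/3)·arctan(3√3))). -/
open Real

-- LHS is a root of x^3+x^2-2x-1
lemma lhs_root : (2*cos (2*π/7))^3 + (2*cos (2*π/7))^2 - 2*(2*cos (2*π/7)) - 1 = 0 := by
  set θ : ℝ := 2*π/7 with hθ
  have h1 : cos (4*θ) = cos (3*θ) := by
    have : 4*θ = 2*π - 3*θ := by rw [hθ]; ring
    rw [this, Real.cos_sub, Real.cos_two_pi, Real.sin_two_pi]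
    ring
  have h4 : cos (4*θ) = 2*(2*(cos θ)^2-1)^2 - 1 := by
    rw [show (4:ℝ)*θ = 2*(2*θ) by ring, Real.cos_two_mul, Real.cos_two_mul]
  have h3 : cos (3*θ) = 4*(cos θ)^3 - 3*(cos θ) := Real.cos_three_mul θ
  have hne : cos θ ≠ 1 := by
    have h0 : cos θ < cos 0 := by
      apply Real.cos_lt_cos_of_nonneg_of_le_pi le_rfl
      · rw [hθ]; linarith [Real.pi_pos]
      · rw [hθ]; positivity
    rw [Real.cos_zero] at h0
    linarith
  have key : (cos θ - 1) * (8*(cos θ)^3 + 4*(cos θ)^2 - 4*(cos θ) - 1) = 0 := by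
    have := h1
    rw [h4, h3] at this
    nlinarith [this]
  have : 8*(cos θ)^3 + 4*(cos θ)^2 - 4*(cos θ) - 1 = 0 := by
    rcases mul_eq_zero.1 key with h | h
    · exact absurd (by linarith) hne
    · exact h
  nlinarith [this]

lemma sqrt28 : Real.sqrt 28 = 2 * Real.sqrt 7 := by
  rw [show (28:ℝ) = 2^2 * 7 by norm_num, Real.sqrt_mul (by positivity), Real.sqrt_sq (by norm_num)]

-- cos of arctan value
lemma cos_t : Real.cos (Real.arctan (3*Real.sqrt 3)) = 1 / (2*Real.sqrt 7) := by
  rw [Real.cos_arctan]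
  have : (1:ℝ) + (3*Real.sqrt 3)^2 = 28 := by
    have := Real.sq_sqrt (by norm_num : (3:ℝ) ≥ 0).le
    nlinarith [Real.sq_sqrt (show (0:ℝ) ≤ 3 by norm_num)]
  rw [this, sqrt28]

lemma rhs_root :
    ((1/3) * (-1 + 2 * Real.sqrt 7 * Real.cos ((1/3) * Real.arctan (3 * Real.sqrt 3))))^3
    + ((1/3) * (-1 + 2 * Real.sqrt 7 * Real.cos ((1/3) * Real.arctan (3 * Real.sqrt 3))))^2
    - 2*((1/3) * (-1 + 2 * Real.sqrt 7 * Real.cos ((1/3) * Real.arctan (3 * Real.sqrt 3)))) - 1 = 0 := by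
  set t := Real.arctan (3*Real.sqrt 3) with ht
  set c := Real.cos ((1/3)*t) with hc
  have h3 : Real.cos t = 4*c^3 - 3*c := by
    rw [show t = 3*((1/3)*t) by ring, Real.cos_three_mul]
  have hs : Real.sqrt 7 ^ 2 = 7 := Real.sq_sqrt (by norm_num)
  have hspos : (0:ℝ) < Real.sqrt 7 := by positivity
  have hct : Real.cos t = 1/(2*Real.sqrt 7) := cos_t
  have H2 : 2 * Real.sqrt 7 * (4*c^3 - 3*c) = 1 := by
    rw [← h3, hct]; field_simp
  linear_combination (7/27)*H2 + (8/27)*Real.sqrt 7*c^3*hs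

theorem cos_two_pi_seventh_identity :
    2 * Real.cos (2 * Real.pi / 7) =
      (1/3) * (-1 + 2 * Real.sqrt 7 * Real.cos ((1/3) * Real.arctan (3 * Real.sqrt 3))) := by
  set a := 2 * Real.cos (2*Real.pi/7) with ha
  set b := (1/3) * (-1 + 2 * Real.sqrt 7 * Real.cos ((1/3) * Real.arctan (3 * Real.sqrt 3))) with hb
  have hpa : a^3 + a^2 - 2*a - 1 = 0 := by
    have := lhs_root; rw [ha]; exact this
  have hpb : b^3 + b^2 - 2*b - 1 = 0 := rhs_root
  -- a > 1
  have ha1 : 1 < a := by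
    have hlt : Real.cos (Real.pi/3) < Real.cos (2*Real.pi/7) := by
      apply Real.cos_lt_cos_of_nonneg_of_le_pi
      · positivity
      · linarith [Real.pi_pos]
      · linarith [Real.pi_pos]
    rw [Real.cos_pi_div_three] at hlt
    rw [ha]; linarith
  -- b > 1
  have hb1 : 1 < b := by
    have hφpos : 0 < (1/3) * Real.arctan (3*Real.sqrt 3) := by
      have : 0 < Real.arctan (3*Real.sqrt 3) := by
        have := Real.arctan_strictMono (show (0:ℝ) < 3*Real.sqrt 3 by positivity)
        rwa [Real.arctan_zero] at this
      linarith
    have hφlt : (1/3) * Real.arctan (3*Real.sqrt 3) < Real.pi/6 := by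
      have := Real.arctan_lt_pi_div_two (3*Real.sqrt 3)
      linarith
    have hclt : Real.cos (Real.pi/6) < Real.cos ((1/3) * Real.arctan (3*Real.sqrt 3)) := by
      apply Real.cos_lt_cos_of_nonneg_of_le_pi
      · positivity
      · linarith [Real.pi_pos]
      · exact hφlt
    rw [Real.cos_pi_div_six] at hclt
    have h21 : (4:ℝ) < Real.sqrt 7 * Real.sqrt 3 := by
      rw [← Real.sqrt_mul (by norm_num)]
      have : Real.sqrt 16 < Real.sqrt (7*3) := Real.sqrt_lt_sqrt (by norm_num) (by norm_num)
      rw [show Real.sqrt 16 = 4 by rw [show (16:ℝ) = 4^2 by norm_num, Real.sqrt_sq (by norm_num)]] at this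
      linarith
    have hspos : (0:ℝ) < Real.sqrt 7 := by positivity
    rw [hb]
    nlinarith [hclt, h21, hspos]
  -- uniqueness
  have key : (a - b) * (a^2 + a*b + b^2 + a + b - 2) = 0 := by
    linear_combination hpa - hpb
  have hfac : 0 < a^2 + a*b + b^2 + a + b - 2 := by nlinarith
  rcases mul_eq_zero.1 key with h | h
  · linarith
  · linarith
end

section
/- √7·cos((1/3)·arctan(9√3/10)) - √21·sin((1/3)·arctan(9√3/10)) = 1. -/
theorem sqrt_two_trig_identity :
    Real.sqrt 7 * Real.cos ((1/3) * Real.arctan (9 * Real.sqrt 3 / 10)) -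
      Real.sqrt 21 * Real.sin ((1/3) * Real.arctan (9 * Real.sqrt 3 / 10)) = 1 := by
  have h3 : Real.sqrt 3 ^ 2 = 3 := Real.sq_sqrt (by norm_num)
  have h7 : Real.sqrt 7 ^ 2 = 7 := Real.sq_sqrt (by norm_num)
  have h7pos : (0:ℝ) < Real.sqrt 7 := Real.sqrt_pos.mpr (by norm_num)
  have h3nonneg : (0:ℝ) ≤ Real.sqrt 3 := Real.sqrt_nonneg 3
  have h21 : Real.sqrt 21 = Real.sqrt 7 * Real.sqrt 3 := by
    rw [← Real.sqrt_mul (by norm_num)]; norm_num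
  set θ := Real.arctan (9 * Real.sqrt 3 / 10) with hθ
  have hθpos : 0 < θ := by
    have : Real.arctan 0 < Real.arctan (9 * Real.sqrt 3 / 10) :=
      Real.arctan_strictMono (by positivity)
    rw [Real.arctan_zero] at this; exact this
  have hθlt : θ < Real.pi / 2 := Real.arctan_lt_pi_div_two _
  set t := (1/3 : ℝ) * θ with ht
  set c := Real.cos t with hc
  set s := Real.sin t with hs
  have hcs : s ^ 2 + c ^ 2 = 1 := Real.sin_sq_add_cos_sq t
  have hcosθ : Real.cos θ = 10 / (7 * Real.sqrt 7) := by
    rw [hθ, Real.cos_arctan]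
    have h1 : 1 + (9 * Real.sqrt 3 / 10) ^ 2 = (7 * Real.sqrt 7 / 10) ^ 2 := by
      rw [div_pow, mul_pow, h3, div_pow, mul_pow, h7]; norm_num
    rw [h1, Real.sqrt_sq (by positivity), one_div_div]
  have key : 7 * Real.sqrt 7 * (4 * c ^ 3 - 3 * c) = 10 := by
    have h3t : (3:ℝ) * t = θ := by rw [ht]; ring
    have := Real.cos_three_mul t
    rw [h3t, hcosθ, ← hc] at this
    field_simp at this
    linarith
  have hx3 : (Real.sqrt 7 * c - Real.sqrt 21 * s) ^ 3
      - 21 * (Real.sqrt 7 * c - Real.sqrt 21 * s) + 20 = 0 := by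
    rw [h21]
    linear_combination
      (Real.sqrt 7 * c ^ 3 - 3 * Real.sqrt 7 * Real.sqrt 3 * c ^ 2 * s
        + 3 * Real.sqrt 7 * Real.sqrt 3 ^ 2 * c * s ^ 2
        - Real.sqrt 7 * Real.sqrt 3 ^ 3 * s ^ 3) * h7
      + (21 * Real.sqrt 7 * c * s ^ 2 - 7 * Real.sqrt 7 * Real.sqrt 3 * s ^ 3) * h3
      + (63 * Real.sqrt 7 * c - 21 * Real.sqrt 7 * Real.sqrt 3 * s) * hcs
      - 2 * key
  set x := Real.sqrt 7 * c - Real.sqrt 21 * s with hx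
  have htpos : 0 < t := by rw [ht]; linarith
  have htlt : t < Real.pi / 2 := by
    have := Real.pi_pos
    rw [ht]; nlinarith
  have hcnn : 0 ≤ c := Real.cos_nonneg_of_mem_Icc ⟨by linarith, le_of_lt htlt⟩
  have hsnn : 0 ≤ s := Real.sin_nonneg_of_nonneg_of_le_pi (le_of_lt htpos)
    (by have := Real.pi_pos; linarith)
  have hc1 : c ≤ 1 := Real.cos_le_one t
  have hs1 : s ≤ 1 := Real.sin_le_one t
  have h21sq : Real.sqrt 21 ^ 2 = 21 := Real.sq_sqrt (by norm_num)
  have h21nn : (0:ℝ) ≤ Real.sqrt 21 := Real.sqrt_nonneg 21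
  have hxlt : x < 4 := by
    have h7lt : Real.sqrt 7 < 4 := by nlinarith
    have : Real.sqrt 21 * s ≥ 0 := by positivity
    nlinarith
  have hxgt : -5 < x := by
    have h21lt : Real.sqrt 21 < 5 := by nlinarith
    have : Real.sqrt 7 * c ≥ 0 := by positivity
    nlinarith
  have hfac : (x - 1) * (x - 4) * (x + 5) = 0 := by linear_combination hx3
  rcases mul_eq_zero.mp hfac with h | h
  · rcases mul_eq_zero.mp h with h | h
    · linarith
    · linarith
  · linarith
end

section
/- cos((1/3)·arctan(3√3(π-1)π / (2 - 3π - 3π² + 2π³))) = (2π - 1)/(2√(π² - π + 1)). -/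
open Real

theorem pi_trig_identity :
    Real.cos ((1/3) * Real.arctan (3 * Real.sqrt 3 * (Real.pi - 1) * Real.pi /
        (2 - 3 * Real.pi - 3 * Real.pi ^ 2 + 2 * Real.pi ^ 3))) =
      (2 * Real.pi - 1) / (2 * Real.sqrt (Real.pi ^ 2 - Real.pi + 1)) := by
  have hpi : (3.14 : ℝ) < π := by linarith [pi_gt_d6]
  set t : ℝ := 3 * Real.sqrt 3 * (π - 1) * π / (2 - 3 * π - 3 * π ^ 2 + 2 * π ^ 3) with ht
  set s : ℝ := Real.sqrt (π ^ 2 - π + 1) with hs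
  set c : ℝ := (2 * π - 1) / (2 * s) with hc
  have hq : (0:ℝ) < π ^ 2 - π + 1 := by nlinarith
  have hs0 : 0 < s := Real.sqrt_pos.mpr hq
  have hs2 : s ^ 2 = π ^ 2 - π + 1 := Real.sq_sqrt hq.le
  have hD : (0:ℝ) < 2 - 3 * π - 3 * π ^ 2 + 2 * π ^ 3 := by nlinarith
  have h3 : (Real.sqrt 3) ^ 2 = 3 := Real.sq_sqrt (by norm_num)
  have hs3 : (0:ℝ) < Real.sqrt 3 := Real.sqrt_pos.mpr (by norm_num)
  -- c bounds
  have hc0 : (1:ℝ)/2 ≤ c := by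
    rw [hc, le_div_iff₀ (by positivity)]
    nlinarith [hs2, hs0]
  have hc1 : c ≤ 1 := by
    rw [hc, div_le_one (by positivity)]
    nlinarith [hs2, hs0]
  have hcm1 : (-1:ℝ) ≤ c := by linarith
  set ψ : ℝ := Real.arccos c with hψ
  have hcosψ : Real.cos ψ = c := Real.cos_arccos hcm1 hc1
  have hψ0 : 0 ≤ ψ := Real.arccos_nonneg c
  have hψle : ψ ≤ π / 3 := by
    by_contra h
    push_neg at h
    have := Real.strictAntiOn_cos ⟨by positivity, by linarith⟩
      ⟨hψ0, Real.arccos_le_pi c⟩ h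
    rw [hcosψ, Real.cos_pi_div_three] at this
    linarith
  -- cos θ computation
  have hθ := Real.cos_arctan t
  have hsq : 1 + t ^ 2 = ((2 * s ^ 3) / (2 - 3 * π - 3 * π ^ 2 + 2 * π ^ 3)) ^ 2 := by
    rw [ht]
    field_simp
    rw [add_div' _ _ _ (pow_ne_zero 2 (by linarith)), div_left_inj' (pow_ne_zero 2 (by linarith))]
    linear_combination (9*π^2*(π-1)^2) * h3 - (4*(s^4 + s^2*(π^2-π+1) + (π^2-π+1)^2)) * hs2
  have hsqrt : Real.sqrt (1 + t ^ 2) = (2 * s ^ 3) / (2 - 3 * π - 3 * π ^ 2 + 2 * π ^ 3) := by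
    rw [hsq, Real.sqrt_sq (by positivity)]
  have hcosθ : Real.cos (Real.arctan t) =
      (2 - 3 * π - 3 * π ^ 2 + 2 * π ^ 3) / (2 * s ^ 3) := by
    rw [hθ, hsqrt]
    rw [one_div_div]
  -- triple angle
  have htriple : Real.cos (3 * ψ) = Real.cos (Real.arctan t) := by
    rw [Real.cos_three_mul, hcosψ, hcosθ, hc]
    field_simp
    linear_combination (-12*(2*π-1)) * hs2
  have hnum : (0:ℝ) < 3 * Real.sqrt 3 * (π - 1) * π := by nlinarith [hs3, pi_pos]
  have ht0 : 0 < t := div_pos hnum hD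
  have hθ0 : 0 < Real.arctan t := by
    rw [← Real.arctan_zero]; exact Real.arctan_strictMono ht0
  have hθlt : Real.arctan t < π / 2 := Real.arctan_lt_pi_div_two t
  have heq : 3 * ψ = Real.arctan t := by
    apply Real.injOn_cos ⟨by linarith, by linarith⟩ ⟨hθ0.le, by linarith [pi_pos]⟩ htriple
  have : (1/3) * Real.arctan t = ψ := by linarith
  rw [this, hcosψ, hc]
end
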